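/- Let R be a unital associative algebra over a field F, let q ∈ F, q ≠ 1, and let A, B ∈ R satisfy A·B − q·B·A = 1. Then for every positive integer l, A^l·B^l = (q−1)^{−l} · ∑_{i=0}^{l} (−1)^{l−i} q^{C(i+1,2)} C(l,i)_q (A·B − B·A)^i, where C(l,i)_q is the Gaussian binomial coefficient and C(i+1,2) = i(i+1)/2. -/

import Mathlib

def qbinom {F : Type*} [Field F] (q : F) : ℕ → ℕ → F
  | _, 0 => 1
  | 0, _ + 1 => 0
  | n + 1, k + 1 => qbinom q n k + q ^ (k + 1) * qbinom q n (k + 1)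

lemma qbinom_zero_right {F : Type*} [Field F] (q : F) (n : ℕ) : qbinom q n 0 = 1 := by
  cases n <;> rfl

lemma qbinom_succ_succ {F : Type*} [Field F] (q : F) (n k : ℕ) :
    qbinom q (n + 1) (k + 1) = qbinom q n k + q ^ (k + 1) * qbinom q n (k + 1) := rfl

lemma qbinom_eq_zero {F : Type*} [Field F] (q : F) : ∀ n k : ℕ, n < k → qbinom q n k = 0 := by
  intro n
  induction n with
  | zero =>
    intro k hk
    obtain ⟨m, rfl⟩ : ∃ m, k = m + 1 := ⟨k - 1, by omega⟩
    rfl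
  | succ n ih =>
    intro k hk
    obtain ⟨m, rfl⟩ : ∃ m, k = m + 1 := ⟨k - 1, by omega⟩
    rw [qbinom_succ_succ, ih m (by omega), ih (m + 1) (by omega)]
    ring

/-- the coefficient appearing in the expansion -/
def dcoef {F : Type*} [Field F] (q : F) (l i : ℕ) : F :=
  ((q - 1)⁻¹) ^ l * (-1 : F) ^ (l - i) * q ^ Nat.choose (i + 1) 2 * qbinom q l i

lemma choose_step (i : ℕ) : Nat.choose (i + 2) 2 = Nat.choose (i + 1) 2 + (i + 1) := by
  simp [Nat.choose_succ_succ, Nat.choose_one_right]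
  omega

lemma AlBl_aux {F : Type*} [Field F] {R : Type*} [Ring R] [Algebra F R]
    (q : F) (hq1 : q ≠ 1) (A B : R) (h : A * B - q • (B * A) = 1) (l : ℕ) :
    A ^ l * B ^ l = ∑ i ∈ Finset.range (l + 1),
      (dcoef q l i) • (A * B - B * A) ^ i := by
  have hq0 : q - 1 ≠ 0 := sub_ne_zero.mpr hq1
  set c : R := A * B - B * A with hc
  have h1 : A * B = 1 + q • (B * A) := by rw [sub_eq_iff_eq_add] at h; exact h
  have hAc : A * c = q • (c * A) := by
    rw [hc, h1]
    simp only [mul_add, add_mul, mul_sub, sub_mul, smul_mul_assoc, mul_smul_comm,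
      ← mul_assoc, mul_one, one_mul, smul_add, smul_sub, smul_smul]
    rw [h1]
    simp only [add_mul, sub_mul, smul_mul_assoc, one_mul]
    module
  have hAcn : ∀ n : ℕ, A * c ^ n = (q ^ n) • (c ^ n * A) := by
    intro n
    induction n with
    | zero => simp
    | succ n ih =>
      rw [pow_succ, ← mul_assoc, ih, smul_mul_assoc, mul_assoc, hAc, mul_smul_comm,
        smul_smul, pow_succ, ← mul_assoc]
  have h2 : (q - 1) • (A * B) = q • c - 1 := by
    rw [hc, ← h]; module
  have hABc : A * B = (q - 1)⁻¹ • (q • c - 1) := by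
    rw [← h2, smul_smul, inv_mul_cancel₀ hq0, one_smul]
  have key : ∀ i : ℕ, A * c ^ i * B = ((q - 1)⁻¹ * q ^ i) • (q • c ^ (i + 1) - c ^ i) := by
    intro i
    rw [hAcn i, smul_mul_assoc, mul_assoc, hABc, mul_smul_comm, smul_smul,
      mul_sub, mul_one, mul_smul_comm, ← pow_succ, mul_comm (q ^ i)]
  induction l with
  | zero => simp [dcoef, qbinom_zero_right]
  | succ l ih =>
    have hE0 : dcoef q l (l + 1) = 0 := by
      simp [dcoef, qbinom_eq_zero q l (l + 1) (by omega)]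
    calc A ^ (l + 1) * B ^ (l + 1) = A * (A ^ l * B ^ l) * B := by
          rw [pow_succ', pow_succ]; simp only [mul_assoc]
      _ = ∑ i ∈ Finset.range (l + 1),
            (dcoef q l i * ((q - 1)⁻¹ * q ^ i)) • (q • c ^ (i + 1) - c ^ i) := by
          rw [ih, Finset.mul_sum, Finset.sum_mul]
          refine Finset.sum_congr rfl fun i _ => ?_
          rw [mul_smul_comm, smul_mul_assoc, key i, smul_smul]
      _ = (∑ i ∈ Finset.range (l + 1),
            (q * (dcoef q l i * ((q - 1)⁻¹ * q ^ i))) • c ^ (i + 1))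
          - ∑ i ∈ Finset.range (l + 1),
            (dcoef q l i * ((q - 1)⁻¹ * q ^ i)) • c ^ i := by
          rw [← Finset.sum_sub_distrib]
          refine Finset.sum_congr rfl fun i _ => ?_
          rw [smul_sub, smul_smul, mul_comm _ q]
      _ = ∑ i ∈ Finset.range (l + 1 + 1), dcoef q (l + 1) i • c ^ i := by
          have hext : ∑ i ∈ Finset.range (l + 2),
              (dcoef q l i * ((q - 1)⁻¹ * q ^ i)) • c ^ i
              = ∑ i ∈ Finset.range (l + 1),
              (dcoef q l i * ((q - 1)⁻¹ * q ^ i)) • c ^ i := by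
            rw [Finset.sum_range_succ, hE0, zero_mul, zero_smul, add_zero]
          rw [← hext, Finset.sum_range_succ' (fun i => (dcoef q l i * ((q - 1)⁻¹ * q ^ i)) • c ^ i) (l + 1),
            Finset.sum_range_succ' (fun i => dcoef q (l + 1) i • c ^ i) (l + 1)]
          have hcoef : ∀ i ≤ l, dcoef q (l + 1) (i + 1)
              = q * (dcoef q l i * ((q - 1)⁻¹ * q ^ i))
                - dcoef q l (i + 1) * ((q - 1)⁻¹ * q ^ (i + 1)) := by
            intro i hi
            simp only [dcoef, Nat.succ_sub_succ, qbinom_succ_succ, choose_step,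
              pow_add, pow_succ]
            rcases eq_or_lt_of_le hi with rfl | hil
            · rw [qbinom_eq_zero q i (i + 1) (by omega), Nat.sub_self,
                Nat.sub_eq_zero_of_le (by omega : i ≤ i + 1)]
              ring
            · rw [show l - i = (l - (i + 1)) + 1 by omega, pow_succ]
              ring
          have hcoef0 : dcoef q (l + 1) 0 = -(dcoef q l 0 * ((q - 1)⁻¹ * q ^ 0)) := by
            simp only [dcoef, Nat.sub_zero, qbinom_zero_right, pow_succ]
            ring
          have hsum : ∑ x ∈ Finset.range (l + 1), dcoef q (l + 1) (x + 1) • c ^ (x + 1)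
              = ∑ x ∈ Finset.range (l + 1),
                ((q * (dcoef q l x * ((q - 1)⁻¹ * q ^ x))) • c ^ (x + 1)
                  - (dcoef q l (x + 1) * ((q - 1)⁻¹ * q ^ (x + 1))) • c ^ (x + 1)) :=
            Finset.sum_congr rfl fun i hi => by
              rw [hcoef i (Finset.mem_range_succ_iff.mp hi), sub_smul]
          rw [hsum, Finset.sum_sub_distrib, hcoef0, neg_smul]
          abel

theorem AlBl_expansion {F : Type*} [Field F] {R : Type*} [Ring R] [Algebra F R]
    (q : F) (hq1 : q ≠ 1) (A B : R) (h : A * B - q • (B * A) = 1) :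
    ∀ l : ℕ, 0 < l →
      A ^ l * B ^ l = ∑ i ∈ Finset.range (l + 1),
        (((q - 1)⁻¹) ^ l * (-1 : F) ^ (l - i) * q ^ Nat.choose (i + 1) 2
            * qbinom q l i) • (A * B - B * A) ^ i := by
  intro l _
  simpa [dcoef] using AlBl_aux q hq1 A B h l
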